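/- arXiv:0912.0841 — 2 statements merged into one kernel-verified Lean document; each statement's English description precedes it below -/
import Mathlib

section
/- Let Ω ⊆ ℂⁿ be open, let φ : Ω → ℝ be a C² plurisubharmonic function, and let f ∈ C_c^∞(Ω). Then Σ_{l=1}^{2n} ∫_Ω |(∂_l φ)|² |f|² e^{−φ} dλ ≤ 4 ( ‖f‖²_φ + Σ_{m=1}^{2n} ∫_Ω |∂_m f − (∂_m φ) f|² e^{−φ} dλ ); in particular, for each l, ‖(∂_l φ) f‖²_φ is bounded by 4 times the weighted twisted Sobolev norm ‖f‖²_{1,φ,∇φ} = ‖f‖²_φ + Σ_m ‖∂_m f − (∂_m φ) f‖²_φ. -/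
open MeasureTheory Complex Metric Filter
noncomputable section

/-- `ℂⁿ` with its Euclidean inner product and norm. -/
abbrev Cn (n : ℕ) := EuclideanSpace ℂ (Fin n)

instance {n : ℕ} : MeasurableSpace (Cn n) := MeasurableSpace.comap WithLp.ofLp MeasurableSpace.pi

/-- Lebesgue measure on `ℂⁿ ≅ ℝ^{2n}`. -/
instance {n : ℕ} : MeasureSpace (Cn n) := ⟨(MeasureTheory.Measure.pi fun _ => volume).map (WithLp.toLp 2)⟩

/-- The real coordinate direction indexed by `(j, b)`: the `x_j`-direction if `b = false`,
the `y_j`-direction if `b = true`. -/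
def dir {n : ℕ} (l : Fin n × Bool) : Cn n :=
  EuclideanSpace.single l.1 (if l.2 then Complex.I else 1)

/-- The real partial derivative `∂_l`, `l` ranging over the `2n` real coordinate
directions of `ℂⁿ`. -/
def pd {n : ℕ} {F : Type} [NormedAddCommGroup F] [NormedSpace ℝ F]
    (l : Fin n × Bool) (f : Cn n → F) (z : Cn n) : F :=
  fderiv ℝ f z (dir l)

/-- The real Laplacian `Δφ = Σ_l ∂_l ∂_l φ`. -/
def lap {n : ℕ} (φ : Cn n → ℝ) (z : Cn n) : ℝ :=
  ∑ l : Fin n × Bool, pd l (pd l φ) z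

/-- `|∇φ|²`, the squared norm of the real gradient. -/
def gradSq {n : ℕ} (φ : Cn n → ℝ) (z : Cn n) : ℝ :=
  ∑ l : Fin n × Bool, (pd l φ z)^2

/-- The Levi form `L_u(z;t) = ¼(D²u(z)(t,t) + D²u(z)(it,it))`. -/
def levi {n : ℕ} (u : Cn n → ℝ) (z t : Cn n) : ℝ :=
  (1/4) * (fderiv ℝ (fun w => fderiv ℝ u w t) z t
    + fderiv ℝ (fun w => fderiv ℝ u w (Complex.I • t)) z (Complex.I • t))

/-- The Wirtinger derivative `∂g/∂z_j = ½(∂g/∂x_j − i ∂g/∂y_j)` of a complex-valued function. -/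
def wz {n : ℕ} (j : Fin n) (g : Cn n → ℂ) (z : Cn n) : ℂ :=
  (1/2) * (pd (j, false) g z - Complex.I * pd (j, true) g z)

/-- The Wirtinger derivative `∂g/∂z̄_j = ½(∂g/∂x_j + i ∂g/∂y_j)` of a complex-valued function. -/
def wzbar {n : ℕ} (j : Fin n) (g : Cn n → ℂ) (z : Cn n) : ℂ :=
  (1/2) * (pd (j, false) g z + Complex.I * pd (j, true) g z)

/-- The Wirtinger derivative `∂φ/∂z_j` of a real-valued function. -/
def wzR {n : ℕ} (j : Fin n) (φ : Cn n → ℝ) (z : Cn n) : ℂ :=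
  (1/2) * (Complex.ofReal (pd (j, false) φ z) - Complex.I * Complex.ofReal (pd (j, true) φ z))

/-- The Wirtinger derivative `∂φ/∂z̄_j` of a real-valued function. -/
def wzbarR {n : ℕ} (j : Fin n) (φ : Cn n → ℝ) (z : Cn n) : ℂ :=
  (1/2) * (Complex.ofReal (pd (j, false) φ z) + Complex.I * Complex.ofReal (pd (j, true) φ z))

/-- The complex Hessian coefficient `∂²φ/∂z_j∂z̄_k`. -/
def hess {n : ℕ} (φ : Cn n → ℝ) (j k : Fin n) (z : Cn n) : ℂ :=
  wz j (fun w => wzbarR k φ w) z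

/-- `∂̄*_φ f = −Σ_j (∂f_j/∂z_j − (∂φ/∂z_j) f_j)` for a `(0,1)`-form `f = (f_1,…,f_n)`. -/
def dbarStar {n : ℕ} (φ : Cn n → ℝ) (f : Fin n → Cn n → ℂ) (z : Cn n) : ℂ :=
  -∑ j, (wz j (f j) z - wzR j φ z * f j z)

/-- `f ∈ C_c^∞(Ω)`: smooth, compactly supported, with support inside `Ω`. -/
def SmoothCompSupp {n : ℕ} (Ω : Set (Cn n)) (f : Cn n → ℂ) : Prop :=
  ContDiff ℝ (⊤ : ℕ∞) f ∧ HasCompactSupport f ∧ tsupport f ⊆ Ω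

section Aux

open Set Manifold

variable {n : ℕ}

instance : BorelSpace (Cn n) := inferInstanceAs (BorelSpace (PiLp 2 (fun _ : Fin n => ℂ)))

instance : MeasureTheory.Measure.IsAddHaarMeasure (volume : Measure (Cn n)) :=
  (PiLp.continuousLinearEquiv 2 ℝ (fun _ : Fin n => ℂ)).symm.isAddHaarMeasure_map
    (Measure.pi fun _ : Fin n => (volume : Measure ℂ))

lemma pd_pd (l : Fin n × Bool) (φ : Cn n → ℝ) (z : Cn n) :
    pd l (pd l φ) z = fderiv ℝ (fun w => fderiv ℝ φ w (dir l)) z (dir l) := rfl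

lemma smul_I_dir (j : Fin n) :
    Complex.I • dir ((j : Fin n), false) = dir ((j : Fin n), true) := by
  ext k
  by_cases h : k = j <;>
    simp [dir, EuclideanSpace.single_apply, h, PiLp.smul_apply, smul_eq_mul]

/-- Positivity of the real Laplacian from plurisubharmonicity at a point. -/
lemma lap_nonneg_of_psh (φ : Cn n → ℝ) (z : Cn n)
    (h : ∀ t : Cn n, 0 ≤ levi φ z t) :
    0 ≤ ∑ l : Fin n × Bool, pd l (pd l φ) z := by
  have hsum : ∑ l : Fin n × Bool, pd l (pd l φ) z
      = ∑ j : Fin n, 4 * levi φ z (dir (j, false)) := by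
    rw [Fintype.sum_prod_type]
    refine Finset.sum_congr rfl fun j _ => ?_
    rw [Fintype.sum_bool, pd_pd, pd_pd, levi, ← smul_I_dir j]
    ring
  rw [hsum]
  exact Finset.sum_nonneg fun j _ => mul_nonneg (by norm_num) (h _)

/-- Integration by parts: the integral of a partial derivative of a compactly supported
`C¹` function vanishes. -/
lemma integral_pd_zero (l : Fin n × Bool) (g : Cn n → ℝ)
    (hg : ContDiff ℝ 1 g) (hgs : HasCompactSupport g) :
    ∫ z, pd l g z = 0 := by
  have h := integral_mul_fderiv_eq_neg_fderiv_mul_of_integrable (μ := (volume : Measure (Cn n)))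
    (f := fun _ => (1:ℝ)) (g := g) (v := dir l) ?_ ?_ ?_ (fun x _ => differentiableAt_const (1:ℝ))
    (fun x _ => hg.differentiable one_ne_zero x)
  · simpa [pd] using h
  · have : (fun x : Cn n => fderiv ℝ (fun _ => (1:ℝ)) x (dir l) * g x) = fun _ => 0 := by
      funext x; simp
    rw [this]; exact integrable_zero _ _ _
  · have hc : Continuous fun z => fderiv ℝ g z (dir l) :=
      (hg.continuous_fderiv one_ne_zero).clm_apply continuous_const
    have hs : HasCompactSupport fun z => fderiv ℝ g z (dir l) :=
      (hgs.fderiv ℝ).comp_left (g := fun L : (Cn n) →L[ℝ] ℝ => L (dir l)) (by simp)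
    simpa using hc.integrable_of_hasCompactSupport hs
  · simpa using hg.continuous.integrable_of_hasCompactSupport hgs

/-- The key integral inequality, for a globally `C²` weight. -/
lemma key_ineq (ψ : Cn n → ℝ) (hψC : ContDiff ℝ 2 ψ)
    (f : Cn n → ℂ) (hfC : ContDiff ℝ (⊤ : ℕ∞) f) (hfK : HasCompactSupport f)
    (hlap : ∀ z : Cn n, 0 ≤ (∑ l : Fin n × Bool, pd l (pd l ψ) z) * ‖f z‖^2) :
    (∑ l : Fin n × Bool, ∫ z, (pd l ψ z)^2 * ‖f z‖^2 * Real.exp (-ψ z))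
      ≤ 4 * ∑ l : Fin n × Bool,
          ∫ z, ‖pd l f z - Complex.ofReal (pd l ψ z) * f z‖^2 * Real.exp (-ψ z) := by
  classical
  have hψdiff : Differentiable ℝ ψ := hψC.differentiable two_ne_zero
  have hfd : Differentiable ℝ f := hfC.differentiable (by simp)
  have haC : ∀ l : Fin n × Bool, ContDiff ℝ 1 (pd l ψ) := fun l =>
    (hψC.fderiv_right (by norm_num)).clm_apply contDiff_const
  have haCont : ∀ l : Fin n × Bool, Continuous (pd l ψ) := fun l => (haC l).continuous
  have ha'Cont : ∀ l : Fin n × Bool, Continuous (pd l (pd l ψ)) := fun l =>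
    ((haC l).continuous_fderiv one_ne_zero).clm_apply continuous_const
  have hpdfCont : ∀ l : Fin n × Bool, Continuous (pd l f) := fun l =>
    (hfC.continuous_fderiv (by simp)).clm_apply continuous_const
  have hECont : Continuous fun z : Cn n => Real.exp (-ψ z) :=
    Real.continuous_exp.comp hψC.continuous.neg
  have hEpos : ∀ z : Cn n, 0 < Real.exp (-ψ z) := fun z => Real.exp_pos _
  have hF2Cont : Continuous fun z : Cn n => ‖f z‖^2 := (hfC.continuous.norm.pow 2)
  have hf0 : ∀ z : Cn n, z ∉ tsupport f → f z = 0 := fun z hz =>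
    image_eq_zero_of_notMem_tsupport hz
  have hpdf0 : ∀ (l : Fin n × Bool) (z : Cn n), z ∉ tsupport f → pd l f z = 0 := by
    intro l z hz
    have h0 : fderiv ℝ f z = 0 := by
      by_contra h
      exact hz (support_fderiv_subset (𝕜 := ℝ) (Function.mem_support.2 h))
    simp [pd, h0]
  have huCont : ∀ l : Fin n × Bool,
      Continuous fun z => pd l f z - Complex.ofReal (pd l ψ z) * f z := fun l =>
    (hpdfCont l).sub ((Complex.continuous_ofReal.comp (haCont l)).mul hfC.continuous)
  -- integrability of all relevant integrands
  have hXint : ∀ l : Fin n × Bool,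
      Integrable (fun z => pd l (pd l ψ) z * (‖f z‖^2 * Real.exp (-ψ z))) := by
    intro l
    refine (((ha'Cont l).mul (hF2Cont.mul hECont)).integrable_of_hasCompactSupport ?_)
    exact HasCompactSupport.intro hfK fun z hz => by simp [hf0 z hz]
  have hYint : ∀ l : Fin n × Bool,
      Integrable (fun z => pd l ψ z *
        (inner ℝ (f z) (pd l f z - Complex.ofReal (pd l ψ z) * f z) : ℝ) * Real.exp (-ψ z)) := by
    intro l
    refine ((((haCont l).mul (hfC.continuous.inner (huCont l))).mul
      hECont).integrable_of_hasCompactSupport ?_)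
    exact HasCompactSupport.intro hfK fun z hz => by
      simp [hf0 z hz, inner_zero_left (𝕜 := ℝ)]
  have hAint : ∀ l : Fin n × Bool,
      Integrable (fun z => (pd l ψ z)^2 * ‖f z‖^2 * Real.exp (-ψ z)) := by
    intro l
    refine (((((haCont l).pow 2)).mul hF2Cont).mul hECont).integrable_of_hasCompactSupport ?_
    exact HasCompactSupport.intro hfK fun z hz => by simp [hf0 z hz]
  have hUint : ∀ l : Fin n × Bool,
      Integrable (fun z =>
        ‖pd l f z - Complex.ofReal (pd l ψ z) * f z‖^2 * Real.exp (-ψ z)) := by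
    intro l
    refine ((((huCont l).norm.pow 2)).mul hECont).integrable_of_hasCompactSupport ?_
    exact HasCompactSupport.intro hfK fun z hz => by simp [hf0 z hz, hpdf0 l z hz]
  -- the integration-by-parts identity, for each l
  have main : ∀ l : Fin n × Bool,
      (∫ z, (pd l ψ z)^2 * ‖f z‖^2 * Real.exp (-ψ z))
        = -(∫ z, pd l (pd l ψ) z * (‖f z‖^2 * Real.exp (-ψ z)))
          - 2 * ∫ z, pd l ψ z *
              (inner ℝ (f z) (pd l f z - Complex.ofReal (pd l ψ z) * f z) : ℝ)
              * Real.exp (-ψ z) := by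
    intro l
    have hG : ∀ z : Cn n, HasFDerivAt (fun w => pd l ψ w * (‖f w‖^2 * Real.exp (-ψ w)))
        ((pd l ψ z) • ((‖f z‖^2) • (Real.exp (-ψ z) • -(fderiv ℝ ψ z))
            + Real.exp (-ψ z) • (2 • (innerSL ℝ (f z)).comp (fderiv ℝ f z)))
          + (‖f z‖^2 * Real.exp (-ψ z)) • fderiv ℝ (pd l ψ) z) z := by
      intro z
      have h1 : HasFDerivAt (pd l ψ) (fderiv ℝ (pd l ψ) z) z :=
        (((haC l).differentiable one_ne_zero) z).hasFDerivAt
      have h2 : HasFDerivAt (fun w => ‖f w‖^2) (2 • (innerSL ℝ (f z)).comp (fderiv ℝ f z)) z :=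
        ((hfd z).hasFDerivAt).norm_sq
      have h3 : HasFDerivAt (fun w => Real.exp (-ψ w))
          (Real.exp (-ψ z) • -(fderiv ℝ ψ z)) z := by
        have hneg : HasFDerivAt (fun w => -ψ w) (-(fderiv ℝ ψ z)) z :=
          ((hψdiff z).hasFDerivAt).neg
        exact (Real.hasDerivAt_exp (-ψ z)).comp_hasFDerivAt z hneg
      exact h1.mul (h2.mul h3)
    have hsplit : ∀ z : Cn n, (inner ℝ (f z) (fderiv ℝ f z (dir l)) : ℝ)
        = (inner ℝ (f z) (fderiv ℝ f z (dir l)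
            - Complex.ofReal (fderiv ℝ ψ z (dir l)) * f z) : ℝ)
          + fderiv ℝ ψ z (dir l) * ‖f z‖^2 := by
      intro z
      rw [← Complex.real_smul, inner_sub_right, real_inner_smul_right,
        real_inner_self_eq_norm_sq]
      ring
    have hpdG : ∀ z : Cn n, pd l (fun w => pd l ψ w * (‖f w‖^2 * Real.exp (-ψ w))) z
        = pd l (pd l ψ) z * (‖f z‖^2 * Real.exp (-ψ z))
          + 2 * (pd l ψ z * (inner ℝ (f z) (pd l f z - Complex.ofReal (pd l ψ z) * f z) : ℝ)
              * Real.exp (-ψ z))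
          + (pd l ψ z)^2 * ‖f z‖^2 * Real.exp (-ψ z) := by
      intro z
      have h0 := (hG z).fderiv
      show fderiv ℝ (fun w => pd l ψ w * (‖f w‖^2 * Real.exp (-ψ w))) z (dir l) = _
      rw [h0]
      simp only [ContinuousLinearMap.add_apply, ContinuousLinearMap.smul_apply,
        ContinuousLinearMap.comp_apply, ContinuousLinearMap.neg_apply, innerSL_apply_apply,
        smul_eq_mul, nsmul_eq_mul, Nat.cast_ofNat, pd]
      rw [hsplit z]
      ring
    have hF2C1 : ContDiff ℝ 1 fun w : Cn n => ‖f w‖^2 :=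
      (hfC.of_le (by exact_mod_cast le_top)).norm_sq (𝕜 := ℝ)
    have hEC1 : ContDiff ℝ 1 fun w : Cn n => Real.exp (-ψ w) :=
      (Real.contDiff_exp.of_le le_top).comp (hψC.of_le one_le_two).neg
    have hGC : ContDiff ℝ 1 fun w => pd l ψ w * (‖f w‖^2 * Real.exp (-ψ w)) :=
      (haC l).mul (hF2C1.mul hEC1)
    have hGsupp : HasCompactSupport fun w => pd l ψ w * (‖f w‖^2 * Real.exp (-ψ w)) :=
      HasCompactSupport.intro hfK fun z hz => by simp [hf0 z hz]
    have hIBP := integral_pd_zero l _ hGC hGsupp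
    simp only [hpdG] at hIBP
    have hY2 : Integrable (fun z => 2 * (pd l ψ z *
        (inner ℝ (f z) (pd l f z - Complex.ofReal (pd l ψ z) * f z) : ℝ)
        * Real.exp (-ψ z))) volume := (hYint l).const_mul 2
    have hXY : Integrable (fun z => pd l (pd l ψ) z * (‖f z‖^2 * Real.exp (-ψ z))
        + 2 * (pd l ψ z * (inner ℝ (f z) (pd l f z - Complex.ofReal (pd l ψ z) * f z) : ℝ)
        * Real.exp (-ψ z))) volume := (hXint l).add hY2
    rw [integral_add hXY (hAint l), integral_add (hXint l) hY2, integral_const_mul] at hIBP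
    linarith
  -- nonnegativity of the Laplacian term (summed)
  have hBsum : 0 ≤ ∑ l : Fin n × Bool,
      ∫ z, pd l (pd l ψ) z * (‖f z‖^2 * Real.exp (-ψ z)) := by
    rw [← integral_finset_sum _ (fun l _ => hXint l)]
    refine integral_nonneg fun z => ?_
    have hrw : ∑ l : Fin n × Bool, pd l (pd l ψ) z * (‖f z‖^2 * Real.exp (-ψ z))
        = ((∑ l : Fin n × Bool, pd l (pd l ψ) z) * ‖f z‖^2) * Real.exp (-ψ z) := by
      rw [Finset.sum_mul, Finset.sum_mul]
      exact Finset.sum_congr rfl fun l _ => by ring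
    rw [hrw]
    exact mul_nonneg (hlap z) (hEpos z).le
  -- Cauchy–Schwarz + AM–GM bound on the cross terms
  have hIineq : ∀ l : Fin n × Bool,
      -(2 * ∫ z, pd l ψ z *
          (inner ℝ (f z) (pd l f z - Complex.ofReal (pd l ψ z) * f z) : ℝ) * Real.exp (-ψ z))
        ≤ (1/2) * (∫ z, (pd l ψ z)^2 * ‖f z‖^2 * Real.exp (-ψ z))
          + 2 * ∫ z, ‖pd l f z - Complex.ofReal (pd l ψ z) * f z‖^2 * Real.exp (-ψ z) := by
    intro l
    have hL : (∫ z, -(2 * (pd l ψ z *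
          (inner ℝ (f z) (pd l f z - Complex.ofReal (pd l ψ z) * f z) : ℝ)
          * Real.exp (-ψ z))))
        = -(2 * ∫ z, pd l ψ z *
          (inner ℝ (f z) (pd l f z - Complex.ofReal (pd l ψ z) * f z) : ℝ)
          * Real.exp (-ψ z)) := by
      rw [integral_neg, integral_const_mul]
    have hAhalf : Integrable (fun z => (1/2) * ((pd l ψ z)^2 * ‖f z‖^2 * Real.exp (-ψ z)))
        volume := (hAint l).const_mul _
    have hU2 : Integrable (fun z =>
        2 * (‖pd l f z - Complex.ofReal (pd l ψ z) * f z‖^2 * Real.exp (-ψ z))) volume :=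
      (hUint l).const_mul _
    have hR : (∫ z, ((1/2) * ((pd l ψ z)^2 * ‖f z‖^2 * Real.exp (-ψ z))
          + 2 * (‖pd l f z - Complex.ofReal (pd l ψ z) * f z‖^2 * Real.exp (-ψ z))))
        = (1/2) * (∫ z, (pd l ψ z)^2 * ‖f z‖^2 * Real.exp (-ψ z))
          + 2 * ∫ z, ‖pd l f z - Complex.ofReal (pd l ψ z) * f z‖^2 * Real.exp (-ψ z) := by
      rw [integral_add hAhalf hU2, integral_const_mul, integral_const_mul]
    rw [← hL, ← hR]
    refine integral_mono (((hYint l).const_mul 2).neg) (hAhalf.add hU2) fun z => ?_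
    have h1 : |(inner ℝ (f z) (pd l f z - Complex.ofReal (pd l ψ z) * f z) : ℝ)|
        ≤ ‖f z‖ * ‖pd l f z - Complex.ofReal (pd l ψ z) * f z‖ := abs_real_inner_le_norm _ _
    have h2 : (0:ℝ) < Real.exp (-ψ z) := hEpos z
    set a := pd l ψ z
    set t := (inner ℝ (f z) (pd l f z - Complex.ofReal (pd l ψ z) * f z) : ℝ)
    set Fn := ‖f z‖
    set Un := ‖pd l f z - Complex.ofReal (pd l ψ z) * f z‖
    have habs : |a * t| ≤ |a| * (Fn * Un) := by
      rw [abs_mul]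
      exact mul_le_mul_of_nonneg_left h1 (abs_nonneg a)
    have h3 : -(|a| * (Fn * Un)) ≤ a * t := le_trans (neg_le_neg habs) (neg_abs_le _)
    have hkey : -(2 * (a * t)) ≤ 1/2 * (a^2 * Fn^2) + 2 * Un^2 := by
      nlinarith [sq_nonneg (|a| * Fn - 2 * Un), _root_.sq_abs a, abs_nonneg a, norm_nonneg (f z),
        norm_nonneg (pd l f z - Complex.ofReal (pd l ψ z) * f z)]
    have := mul_le_mul_of_nonneg_right hkey h2.le
    show -(2 * (a * t * Real.exp (-ψ z))) ≤ _
    calc -(2 * (a * t * Real.exp (-ψ z)))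
        = -(2 * (a * t)) * Real.exp (-ψ z) := by ring
      _ ≤ (1/2 * (a^2 * Fn^2) + 2 * Un^2) * Real.exp (-ψ z) := this
      _ = 1/2 * (a^2 * Fn^2 * Real.exp (-ψ z)) + 2 * (Un^2 * Real.exp (-ψ z)) := by ring
  -- assemble
  have e1 : (∑ l : Fin n × Bool, ∫ z, (pd l ψ z)^2 * ‖f z‖^2 * Real.exp (-ψ z))
      = -(∑ l : Fin n × Bool, ∫ z, pd l (pd l ψ) z * (‖f z‖^2 * Real.exp (-ψ z)))
        + ∑ l : Fin n × Bool, -(2 * ∫ z, pd l ψ z *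
            (inner ℝ (f z) (pd l f z - Complex.ofReal (pd l ψ z) * f z) : ℝ)
            * Real.exp (-ψ z)) := by
    rw [Finset.sum_congr rfl fun l _ => main l, ← Finset.sum_neg_distrib]
    rw [← Finset.sum_add_distrib]
    exact Finset.sum_congr rfl fun l _ => by ring
  have e2 : (∑ l : Fin n × Bool, -(2 * ∫ z, pd l ψ z *
        (inner ℝ (f z) (pd l f z - Complex.ofReal (pd l ψ z) * f z) : ℝ) * Real.exp (-ψ z)))
      ≤ ∑ l : Fin n × Bool, ((1/2) * (∫ z, (pd l ψ z)^2 * ‖f z‖^2 * Real.exp (-ψ z))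
          + 2 * ∫ z, ‖pd l f z - Complex.ofReal (pd l ψ z) * f z‖^2 * Real.exp (-ψ z)) :=
    Finset.sum_le_sum fun l _ => hIineq l
  have e3 : (∑ l : Fin n × Bool, ((1/2) * (∫ z, (pd l ψ z)^2 * ‖f z‖^2 * Real.exp (-ψ z))
        + 2 * ∫ z, ‖pd l f z - Complex.ofReal (pd l ψ z) * f z‖^2 * Real.exp (-ψ z)))
      = (1/2) * (∑ l : Fin n × Bool, ∫ z, (pd l ψ z)^2 * ‖f z‖^2 * Real.exp (-ψ z))
        + 2 * ∑ l : Fin n × Bool,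
            ∫ z, ‖pd l f z - Complex.ofReal (pd l ψ z) * f z‖^2 * Real.exp (-ψ z) := by
    rw [Finset.sum_add_distrib, ← Finset.mul_sum, ← Finset.mul_sum]
  linarith [e1, e2, e3, hBsum]

end Aux

open Manifold in
/-- `Σ_l ∫ |∂_l φ|² |f|² e^{−φ} ≤ 4(‖f‖²_φ + Σ_m ‖∂_m f − (∂_m φ)f‖²_φ)`, and in
particular each single term `‖(∂_l φ) f‖²_φ` is bounded by `4‖f‖²_{1,φ,∇φ}`. -/
theorem stmt2 {n : ℕ} (Ω : Set (Cn n)) (hΩ : IsOpen Ω)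
    (φ : Cn n → ℝ) (hφ : ContDiffOn ℝ 2 φ Ω)
    (hpsh : ∀ z ∈ Ω, ∀ t : Cn n, 0 ≤ levi φ z t)
    (f : Cn n → ℂ) (hf : SmoothCompSupp Ω f) :
    (∑ l : Fin n × Bool, ∫ z in Ω, (pd l φ z)^2 * ‖f z‖^2 * Real.exp (-φ z))
      ≤ 4 * ((∫ z in Ω, ‖f z‖^2 * Real.exp (-φ z))
          + ∑ m : Fin n × Bool,
              ∫ z in Ω, ‖pd m f z - Complex.ofReal (pd m φ z) * f z‖^2 * Real.exp (-φ z)) ∧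
    ∀ l : Fin n × Bool,
      (∫ z in Ω, ‖Complex.ofReal (pd l φ z) * f z‖^2 * Real.exp (-φ z))
        ≤ 4 * ((∫ z in Ω, ‖f z‖^2 * Real.exp (-φ z))
            + ∑ m : Fin n × Bool,
                ∫ z in Ω, ‖pd m f z - Complex.ofReal (pd m φ z) * f z‖^2 * Real.exp (-φ z)) := by
  classical
  obtain ⟨hfC, hfK, hfΩ⟩ := hf
  -- Construct a cutoff function and globalize the weight.
  obtain ⟨L, hLc, hKL, hLΩ⟩ := exists_compact_between hfK hΩ hfΩ
  obtain ⟨M, hMc, hLM, hMΩ⟩ := exists_compact_between hLc hΩ hLΩ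
  obtain ⟨χ₀, hχs, hχ0, hχ1⟩ :
      ∃ χ : Cn n → ℝ, ContDiff ℝ (⊤ : ℕ∞) χ ∧ Set.EqOn χ 0 (interior M)ᶜ ∧ Set.EqOn χ 1 L := by
    obtain ⟨g, h0, h1, _⟩ := exists_contMDiffMap_zero_one_of_isClosed (𝓘(ℝ, Cn n)) (n := ⊤)
      (isOpen_interior.isClosed_compl) hLc.isClosed (disjoint_compl_left.mono_right hLM)
    exact ⟨g, (contMDiff_iff_contDiff).1 g.contMDiff, h0, h1⟩
  set U : Set (Cn n) := interior L with hUdef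
  have hUopen : IsOpen U := isOpen_interior
  have hKU : tsupport f ⊆ U := hKL
  have hUΩ : U ⊆ Ω := interior_subset.trans hLΩ
  set ψ : Cn n → ℝ := fun z => χ₀ z * φ z with hψdef
  have hχM : tsupport χ₀ ⊆ Ω := by
    have h1 : Function.support χ₀ ⊆ interior M := by
      intro z hz
      by_contra h
      exact hz (hχ0 h)
    calc tsupport χ₀ ⊆ closure (interior M) := closure_mono h1
      _ ⊆ M := closure_minimal interior_subset hMc.isClosed
      _ ⊆ Ω := hMΩ
  have hψφ : Set.EqOn ψ φ U := fun z hz => by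
    simp [hψdef, hχ1 (interior_subset hz)]
  have hψC : ContDiff ℝ 2 ψ := by
    rw [contDiff_iff_contDiffAt]
    intro z
    by_cases hz : z ∈ Ω
    · exact (((hχs.of_le (by decide)).contDiffOn).mul hφ).contDiffAt
        (hΩ.mem_nhds hz)
    · have hz' : z ∉ tsupport χ₀ := fun h => hz (hχM h)
      have hev : ψ =ᶠ[nhds z] (fun _ => (0:ℝ)) := by
        filter_upwards [(isOpen_compl_iff.2 (isClosed_tsupport χ₀)).mem_nhds hz'] with w hw
        simp [hψdef, image_eq_zero_of_notMem_tsupport hw]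
      exact (contDiffAt_const (c := (0:ℝ))).congr_of_eventuallyEq hev
  -- derivatives of ψ and φ agree on U
  have hfd1 : ∀ z ∈ U, fderiv ℝ ψ z = fderiv ℝ φ z := fun z hz =>
    (Filter.eventuallyEq_of_mem (hUopen.mem_nhds hz) hψφ).fderiv_eq
  have hpdU : ∀ (l : Fin n × Bool), ∀ z ∈ U, pd l ψ z = pd l φ z := fun l z hz => by
    simp only [pd, hfd1 z hz]
  have hpd2U : ∀ (l : Fin n × Bool), ∀ z ∈ U, pd l (pd l ψ) z = pd l (pd l φ) z := by
    intro l z hz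
    have hev : pd l ψ =ᶠ[nhds z] pd l φ :=
      Filter.eventuallyEq_of_mem (hUopen.mem_nhds hz) (fun w hw => hpdU l w hw)
    simp only [pd, hev.fderiv_eq]
  have hf0 : ∀ z : Cn n, z ∉ tsupport f → f z = 0 := fun z hz =>
    image_eq_zero_of_notMem_tsupport hz
  have hpdf0 : ∀ (l : Fin n × Bool) (z : Cn n), z ∉ tsupport f → pd l f z = 0 := by
    intro l z hz
    have h0 : fderiv ℝ f z = 0 := by
      by_contra h
      exact hz (support_fderiv_subset (𝕜 := ℝ) (Function.mem_support.2 h))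
    simp [pd, h0]
  -- Laplacian positivity
  have hlap : ∀ z : Cn n, 0 ≤ (∑ l : Fin n × Bool, pd l (pd l ψ) z) * ‖f z‖^2 := by
    intro z
    by_cases hz : f z = 0
    · simp [hz]
    · have hzU : z ∈ U := hKU (subset_closure (Function.mem_support.2 hz))
      have h1 : (∑ l : Fin n × Bool, pd l (pd l ψ) z)
          = ∑ l : Fin n × Bool, pd l (pd l φ) z :=
        Finset.sum_congr rfl fun l _ => hpd2U l z hzU
      rw [h1]
      exact mul_nonneg (lap_nonneg_of_psh φ z (hpsh z (hUΩ hzU))) (by positivity)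
  have hkey := key_ineq ψ hψC f hfC hfK hlap
  -- transfer integrals over Ω with weight φ to integrals over the whole space with weight ψ
  have convInt : ∀ (F G : Cn n → ℝ), (∀ z ∈ U, F z = G z)
      → (∀ z : Cn n, z ∉ tsupport f → F z = 0) → (∀ z : Cn n, z ∉ tsupport f → G z = 0)
      → (∫ z in Ω, F z) = ∫ z, G z := by
    intro F G h1 h2 h3
    have hFG : ∀ z, F z = G z := fun z => by
      by_cases hz : z ∈ U
      · exact h1 z hz
      · have hzK : z ∉ tsupport f := fun h => hz (hKU h)
        rw [h2 z hzK, h3 z hzK]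
    calc (∫ z in Ω, F z) = ∫ z in Ω, G z := by simp only [hFG]
      _ = ∫ z, G z := setIntegral_eq_integral_of_forall_compl_eq_zero
          (fun z hz => h3 z (fun h => hz (hfΩ h)))
  have eqA : ∀ l : Fin n × Bool,
      (∫ z in Ω, (pd l φ z)^2 * ‖f z‖^2 * Real.exp (-φ z))
        = ∫ z, (pd l ψ z)^2 * ‖f z‖^2 * Real.exp (-ψ z) := by
    intro l
    refine convInt _ _ (fun z hz => by rw [hpdU l z hz, hψφ hz]) ?_ ?_
    · intro z hz; simp [hf0 z hz]
    · intro z hz; simp [hf0 z hz]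
  have eqU : ∀ m : Fin n × Bool,
      (∫ z in Ω, ‖pd m f z - Complex.ofReal (pd m φ z) * f z‖^2 * Real.exp (-φ z))
        = ∫ z, ‖pd m f z - Complex.ofReal (pd m ψ z) * f z‖^2 * Real.exp (-ψ z) := by
    intro m
    refine convInt _ _ (fun z hz => by rw [hpdU m z hz, hψφ hz]) ?_ ?_
    · intro z hz; simp [hf0 z hz, hpdf0 m z hz]
    · intro z hz; simp [hf0 z hz, hpdf0 m z hz]
  have hN : 0 ≤ ∫ z in Ω, ‖f z‖^2 * Real.exp (-φ z) :=
    setIntegral_nonneg hΩ.measurableSet fun z _ => by positivity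
  have part1 : (∑ l : Fin n × Bool, ∫ z in Ω, (pd l φ z)^2 * ‖f z‖^2 * Real.exp (-φ z))
      ≤ 4 * ((∫ z in Ω, ‖f z‖^2 * Real.exp (-φ z))
          + ∑ m : Fin n × Bool,
              ∫ z in Ω, ‖pd m f z - Complex.ofReal (pd m φ z) * f z‖^2 * Real.exp (-φ z)) := by
    have hA : (∑ l : Fin n × Bool, ∫ z in Ω, (pd l φ z)^2 * ‖f z‖^2 * Real.exp (-φ z))
        = ∑ l : Fin n × Bool, ∫ z, (pd l ψ z)^2 * ‖f z‖^2 * Real.exp (-ψ z) :=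
      Finset.sum_congr rfl fun l _ => eqA l
    have hU : (∑ m : Fin n × Bool,
          ∫ z in Ω, ‖pd m f z - Complex.ofReal (pd m φ z) * f z‖^2 * Real.exp (-φ z))
        = ∑ m : Fin n × Bool,
            ∫ z, ‖pd m f z - Complex.ofReal (pd m ψ z) * f z‖^2 * Real.exp (-ψ z) :=
      Finset.sum_congr rfl fun m _ => eqU m
    rw [hA, hU]
    linarith [hkey, hN]
  refine ⟨part1, fun l => ?_⟩
  have h1 : (∫ z in Ω, ‖Complex.ofReal (pd l φ z) * f z‖^2 * Real.exp (-φ z))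
      = ∫ z in Ω, (pd l φ z)^2 * ‖f z‖^2 * Real.exp (-φ z) := by
    simp only [norm_mul, Complex.norm_real, Real.norm_eq_abs, mul_pow, _root_.sq_abs]
  have h2 : (∫ z in Ω, (pd l φ z)^2 * ‖f z‖^2 * Real.exp (-φ z))
      ≤ ∑ m : Fin n × Bool, ∫ z in Ω, (pd m φ z)^2 * ‖f z‖^2 * Real.exp (-φ z) :=
    Finset.single_le_sum
      (f := fun m : Fin n × Bool => ∫ z in Ω, (pd m φ z)^2 * ‖f z‖^2 * Real.exp (-φ z))
      (fun m _ => setIntegral_nonneg hΩ.measurableSet fun z _ => by positivity)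
      (Finset.mem_univ l)
  rw [h1]
  exact le_trans h2 part1
end
end

section
/- Let Ω ⊆ ℂⁿ be open, let φ : Ω → ℝ be of class C², let ε > 0, and let f ∈ C_c^∞(Ω). Then ∫_Ω ( |∇φ|² + (1+ε) Δφ ) |f|² e^{−φ} dλ ≤ (2 + ε + 1/ε) Σ_{l=1}^{2n} ∫_Ω |∂_l f − (∂_l φ) f|² e^{−φ} dλ. -/
open MeasureTheory Complex Metric Filter
noncomputable section

instance {n : ℕ} : BorelSpace (Cn n) := PiLp.borelSpace 2
instance {n : ℕ} : (volume : Measure (Cn n)).IsAddHaarMeasure :=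
  by
    have := (PiLp.continuousLinearEquiv 2 ℝ (fun _ : Fin n => ℂ)).symm.isAddHaarMeasure_map
      (MeasureTheory.Measure.pi fun _ => volume)
    exact this

lemma integral_pd_eq_zero {n : ℕ} (g : Cn n → ℝ) (hg : ContDiff ℝ 1 g)
    (hgc : HasCompactSupport g) (l : Fin n × Bool) : ∫ z, pd l g z = 0 := by
  have hd : Differentiable ℝ g := hg.differentiable one_ne_zero
  have h := integral_mul_fderiv_eq_neg_fderiv_mul_of_integrable (μ := (volume : Measure (Cn n)))
    (f := fun _ : Cn n => (1:ℝ)) (g := g) (v := dir l) ?_ ?_ ?_ (fun x _ => differentiableAt_const 1) (fun x _ => hd x)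
  · simpa [pd, fderiv_const] using h
  · simp only [fderiv_fun_const, Pi.zero_apply, ContinuousLinearMap.zero_apply, zero_mul]
    exact integrable_zero _ _ _
  · simp only [one_mul]
    exact ((hg.continuous_fderiv one_ne_zero).clm_apply continuous_const).integrable_of_hasCompactSupport
      (HasCompactSupport.fderiv_apply (𝕜 := ℝ) hgc (dir l))
  · simpa using hg.continuous.integrable_of_hasCompactSupport hgc

lemma pd_congr {n : ℕ} {F : Type} [NormedAddCommGroup F] [NormedSpace ℝ F]
    {l : Fin n × Bool} {p q : Cn n → F} {z : Cn n} (h : p =ᶠ[nhds z] q) :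
    pd l p z = pd l q z := by
  unfold pd; rw [h.fderiv_eq]

lemma pd_mul {n : ℕ} {l : Fin n × Bool} {p q : Cn n → ℝ} {z : Cn n}
    (hp : DifferentiableAt ℝ p z) (hq : DifferentiableAt ℝ q z) :
    pd l (fun w => p w * q w) z = pd l p z * q z + p z * pd l q z := by
  unfold pd
  rw [fderiv_fun_mul hp hq]
  simp only [ContinuousLinearMap.add_apply, ContinuousLinearMap.smul_apply, smul_eq_mul]
  ring

lemma pd_exp_neg {n : ℕ} {l : Fin n × Bool} {ψ : Cn n → ℝ} {z : Cn n}
    (hψ : DifferentiableAt ℝ ψ z) :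
    pd l (fun w => Real.exp (-ψ w)) z = -pd l ψ z * Real.exp (-ψ z) := by
  unfold pd
  have h1 : HasFDerivAt (fun w => -ψ w) (-(fderiv ℝ ψ z)) z := hψ.hasFDerivAt.neg
  have h2 := (Real.hasDerivAt_exp (-ψ z)).comp_hasFDerivAt z h1
  have h3 : (fun w => Real.exp (-ψ w)) = Real.exp ∘ fun w => -ψ w := rfl
  rw [h3, h2.fderiv]
  simp [mul_comm]

lemma pd_re {n : ℕ} {l : Fin n × Bool} {f : Cn n → ℂ} {z : Cn n}
    (hf : DifferentiableAt ℝ f z) :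
    pd l (fun w => (f w).re) z = (pd l f z).re := by
  unfold pd
  have : (fun w => (f w).re) = Complex.reCLM ∘ f := rfl
  rw [this, fderiv_comp z Complex.reCLM.differentiableAt hf, Complex.reCLM.fderiv]
  simp

lemma pd_im {n : ℕ} {l : Fin n × Bool} {f : Cn n → ℂ} {z : Cn n}
    (hf : DifferentiableAt ℝ f z) :
    pd l (fun w => (f w).im) z = (pd l f z).im := by
  unfold pd
  have : (fun w => (f w).im) = Complex.imCLM ∘ f := rfl
  rw [this, fderiv_comp z Complex.imCLM.differentiableAt hf, Complex.imCLM.fderiv]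
  simp

lemma contDiff_pd {n : ℕ} {l : Fin n × Bool} {ψ : Cn n → ℝ} {m : ℕ}
    (hψ : ContDiff ℝ (m + 1 : ℕ) ψ) : ContDiff ℝ (m : ℕ) (pd l ψ) := by
  have h1 : ContDiff ℝ (m : ℕ) (fderiv ℝ ψ) := hψ.fderiv_right (by norm_cast)
  exact h1.clm_apply contDiff_const

lemma continuous_pd {n : ℕ} {l : Fin n × Bool} {ψ : Cn n → ℝ}
    (hψ : ContDiff ℝ 1 ψ) : Continuous (pd l ψ) :=
  ((hψ.continuous_fderiv one_ne_zero).clm_apply continuous_const)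

lemma continuous_pdC {n : ℕ} {l : Fin n × Bool} {f : Cn n → ℂ}
    (hf : ContDiff ℝ (⊤ : ℕ∞) f) : Continuous (pd l f) :=
  ((hf.continuous_fderiv (by norm_num)).clm_apply continuous_const)

lemma pd_add {n : ℕ} {l : Fin n × Bool} {p q : Cn n → ℝ} {z : Cn n}
    (hp : DifferentiableAt ℝ p z) (hq : DifferentiableAt ℝ q z) :
    pd l (fun w => p w + q w) z = pd l p z + pd l q z := by
  unfold pd
  rw [fderiv_fun_add hp hq]
  simp

lemma norm_expand {x y : ℂ} {c : ℝ} :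
    ‖x - (c : ℂ) * y‖^2 = (x.re - c*y.re)^2 + (x.im - c*y.im)^2 := by
  rw [Complex.sq_norm, Complex.normSq_apply]
  simp only [Complex.sub_re, Complex.sub_im, Complex.mul_re, Complex.mul_im,
    Complex.ofReal_re, Complex.ofReal_im]
  ring

lemma ptwise {ε a xr xi yr yi : ℝ} (hε : 0 < ε) :
    a^2*(yr^2+yi^2) + (1+ε)*(a^2*(yr^2+yi^2) - 2*a*(yr*xr + yi*xi))
      ≤ (2+ε+1/ε) * ((xr - a*yr)^2 + (xi - a*yi)^2) := by
  rw [show (2+ε+1/ε) = (1+ε)^2/ε by field_simp; ring]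
  rw [div_mul_eq_mul_div, le_div_iff₀ hε]
  nlinarith [sq_nonneg (ε*a*yr + (1+ε)*(xr - a*yr)), sq_nonneg (ε*a*yi + (1+ε)*(xi - a*yi))]

lemma core {n : ℕ} {ε : ℝ} (hε : 0 < ε) (ψ : Cn n → ℝ) (hψ : ContDiff ℝ 2 ψ)
    (f : Cn n → ℂ) (hf : ContDiff ℝ (⊤ : ℕ∞) f) (hfc : HasCompactSupport f) (l : Fin n × Bool) :
    ∫ z, ((pd l ψ z)^2 + (1+ε) * pd l (pd l ψ) z) * (‖f z‖^2 * Real.exp (-ψ z))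
      ≤ (2+ε+1/ε) * ∫ z, ‖pd l f z - Complex.ofReal (pd l ψ z) * f z‖^2 * Real.exp (-ψ z) := by
  have hψ2 : ContDiff ℝ ((1:ℕ) + 1 : ℕ) ψ := by exact_mod_cast hψ
  have ha1 : ContDiff ℝ (1:ℕ) (pd l ψ) := contDiff_pd hψ2
  have hψ1 : ContDiff ℝ 1 ψ := hψ.of_le one_le_two
  have hfd : Differentiable ℝ f := hf.differentiable (by norm_num)
  set a := pd l ψ with ha_def
  set u := fun z => (f z).re with hu_def
  set v := fun z => (f z).im with hv_def
  have hu : ContDiff ℝ 1 u := Complex.reCLM.contDiff.comp (hf.of_le (by norm_num))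
  have hv : ContDiff ℝ 1 v := Complex.imCLM.contDiff.comp (hf.of_le (by norm_num))
  set ρ := fun z => Real.exp (-ψ z) with hρ_def
  have hρ : ContDiff ℝ 1 ρ := Real.contDiff_exp.comp hψ1.neg
  have hρpos : ∀ z, 0 < ρ z := fun z => Real.exp_pos _
  have hwnorm : ∀ z, ‖f z‖^2 = u z^2 + v z^2 := by
    intro z
    rw [Complex.sq_norm, Complex.normSq_apply]
    simp [hu_def, hv_def]; ring
  have hf0 : ∀ z, f z = 0 → u z = 0 ∧ v z = 0 := by
    intro z hz
    simp [hu_def, hv_def, hz]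
  -- integrability helper
  have integ : ∀ (g : Cn n → ℝ), Continuous g → (∀ z, z ∉ tsupport f → g z = 0) →
      Integrable g := by
    intro g hg h
    exact hg.integrable_of_hasCompactSupport (HasCompactSupport.intro hfc h)
  have hpf0 : ∀ z, z ∉ tsupport f → pd l f z = 0 := by
    intro z hz
    have hev : f =ᶠ[nhds z] (fun _ => (0:ℂ)) :=
      eventually_of_mem ((isClosed_tsupport f).isOpen_compl.mem_nhds hz) fun w hw =>
        image_eq_zero_of_notMem_tsupport hw
    rw [pd_congr hev]
    simp [pd, fderiv_const]
  -- continuity facts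
  have hcont_a : Continuous a := ha1.continuous
  have hcont_a' : Continuous (pd l a) := continuous_pd ha1
  have hcont_pf : Continuous (pd l f) := continuous_pdC hf
  -- the function whose integral of derivative vanishes
  set g := fun z => a z * ((u z^2 + v z^2) * ρ z) with hg_def
  have hg1 : ContDiff ℝ 1 g := ha1.mul (((hu.pow 2).add (hv.pow 2)).mul hρ)
  have hgc : HasCompactSupport g :=
    HasCompactSupport.intro hfc fun z hz => by
      obtain ⟨h1, h2⟩ := hf0 z (image_eq_zero_of_notMem_tsupport hz)
      simp [hg_def, h1, h2]
  have h0 : ∫ z, pd l g z = 0 := integral_pd_eq_zero g hg1 hgc l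
  -- pointwise derivative expansion
  set P := fun z => pd l a z * ((u z^2 + v z^2) * ρ z) with hP_def
  set Q := fun z => (a z^2*(u z^2 + v z^2)
      - 2*a z*(u z*(pd l f z).re + v z*(pd l f z).im)) * ρ z with hQ_def
  have hgexp : ∀ z, pd l g z = P z - Q z := by
    intro z
    have dau : DifferentiableAt ℝ a z := ha1.differentiable one_ne_zero z
    have duz : DifferentiableAt ℝ u z := hu.differentiable one_ne_zero z
    have dvz : DifferentiableAt ℝ v z := hv.differentiable one_ne_zero z
    have dψz : DifferentiableAt ℝ ψ z := hψ1.differentiable one_ne_zero z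
    have dρz : DifferentiableAt ℝ ρ z := hρ.differentiable one_ne_zero z
    have dsq : DifferentiableAt ℝ (fun w => u w^2 + v w^2) z :=
      ((duz.pow 2).add (dvz.pow 2))
    have e1 : pd l g z = pd l a z * ((u z^2 + v z^2) * ρ z)
        + a z * pd l (fun w => (u w^2 + v w^2) * ρ w) z := by
      have := pd_mul (l := l) (q := fun w => (u w^2 + v w^2) * ρ w) dau (dsq.mul dρz)
      simpa only [hg_def] using this
    have e2 : pd l (fun w => (u w^2 + v w^2) * ρ w) z
        = pd l (fun w => u w^2 + v w^2) z * ρ z + (u z^2 + v z^2) * pd l ρ z :=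
      pd_mul dsq dρz
    have e3 : pd l (fun w => u w^2 + v w^2) z
        = 2 * u z * (pd l f z).re + 2 * v z * (pd l f z).im := by
      have h4 : pd l (fun w => u w^2 + v w^2) z
          = pd l (fun w => u w * u w) z + pd l (fun w => v w * v w) z := by
        have := pd_add (l := l) (p := fun w => u w * u w) (q := fun w => v w * v w) (duz.mul duz) (dvz.mul dvz)
        simpa only [sq] using this
      rw [h4, pd_mul duz duz, pd_mul dvz dvz, pd_re hfd.differentiableAt,
        pd_im hfd.differentiableAt]
      ring
    have e4 : pd l ρ z = -a z * ρ z := pd_exp_neg dψz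
    rw [e1, e2, e3, e4, hP_def, hQ_def]
    ring
  -- integrability of each piece
  have hiP : Integrable P := by
    refine integ P (hcont_a'.mul (((hu.continuous.pow 2).add (hv.continuous.pow 2)).mul
      hρ.continuous)) ?_
    intro z hz
    obtain ⟨h1, h2⟩ := hf0 z (image_eq_zero_of_notMem_tsupport hz)
    simp [hP_def, h1, h2]
  have hiQ : Integrable Q := by
    refine integ Q ?_ ?_
    · exact ((((hcont_a.pow 2).mul ((hu.continuous.pow 2).add (hv.continuous.pow 2))).sub
        (((continuous_const.mul hcont_a).mul
          ((hu.continuous.mul (Complex.continuous_re.comp hcont_pf)).add (hv.continuous.mul (Complex.continuous_im.comp hcont_pf))))))).mul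
        hρ.continuous
    · intro z hz
      obtain ⟨h1, h2⟩ := hf0 z (image_eq_zero_of_notMem_tsupport hz)
      simp [hQ_def, h1, h2]
  have hPQ : ∫ z, P z = ∫ z, Q z := by
    have : ∫ z, (P z - Q z) = 0 := by
      rw [← h0]; exact integral_congr_ae (Eventually.of_forall fun z => (hgexp z).symm)
    have h5 := integral_sub hiP hiQ
    rw [this] at h5
    linarith [h5]
  -- rewrite the left-hand side
  set A := fun z => a z^2 * ((u z^2 + v z^2) * ρ z) with hA_def
  have hiA : Integrable A := by
    refine integ A (((hcont_a.pow 2)).mul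
      (((hu.continuous.pow 2).add (hv.continuous.pow 2)).mul hρ.continuous)) ?_
    intro z hz
    obtain ⟨h1, h2⟩ := hf0 z (image_eq_zero_of_notMem_tsupport hz)
    simp [hA_def, h1, h2]
  set T := fun z => ‖pd l f z - Complex.ofReal (a z) * f z‖^2 * ρ z with hT_def
  have hcontT : Continuous T :=
    (((hcont_pf.sub ((Complex.continuous_ofReal.comp hcont_a).mul hf.continuous)).norm.pow 2)).mul
      hρ.continuous
  have hiT : Integrable T := by
    refine integ T hcontT ?_
    intro z hz
    simp [hT_def, hpf0 z hz, image_eq_zero_of_notMem_tsupport hz]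
  have step1 : (∫ z, ((a z)^2 + (1+ε) * pd l a z) * (‖f z‖^2 * ρ z))
      = ∫ z, (A z + (1+ε) * Q z) := by
    have e : ∀ z, ((a z)^2 + (1+ε) * pd l a z) * (‖f z‖^2 * ρ z) = A z + (1+ε) * P z := by
      intro z
      rw [hwnorm z]
      simp only [hA_def, hP_def]
      ring
    calc (∫ z, ((a z)^2 + (1+ε) * pd l a z) * (‖f z‖^2 * ρ z))
        = ∫ z, (A z + (1+ε) * P z) := integral_congr_ae (Eventually.of_forall e)
      _ = (∫ z, A z) + (1+ε) * ∫ z, P z := by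
          rw [integral_add hiA (hiP.const_mul (1+ε)), integral_const_mul]
      _ = (∫ z, A z) + (1+ε) * ∫ z, Q z := by rw [hPQ]
      _ = ∫ z, (A z + (1+ε) * Q z) := by
          rw [integral_add hiA (hiQ.const_mul (1+ε)), integral_const_mul]
  have step2 : (∫ z, (A z + (1+ε) * Q z)) ≤ ∫ z, (2+ε+1/ε) * T z := by
    refine integral_mono (hiA.add (hiQ.const_mul (1+ε))) (hiT.const_mul _) ?_
    intro z
    have hne : ‖pd l f z - Complex.ofReal (a z) * f z‖^2
        = ((pd l f z).re - a z * u z)^2 + ((pd l f z).im - a z * v z)^2 := norm_expand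
    have hpt := ptwise (a := a z) (xr := (pd l f z).re) (xi := (pd l f z).im)
      (yr := u z) (yi := v z) hε
    have := mul_le_mul_of_nonneg_right hpt (hρpos z).le
    simp only [hA_def, hQ_def, hT_def, hne, Pi.add_apply]
    nlinarith [this]
  calc (∫ z, ((a z)^2 + (1+ε) * pd l a z) * (‖f z‖^2 * ρ z))
      ≤ ∫ z, (2+ε+1/ε) * T z := by rw [step1]; exact step2
    _ = (2+ε+1/ε) * ∫ z, T z := integral_const_mul _ _


lemma pdC_zero_of_nmem {n : ℕ} {f : Cn n → ℂ} {l : Fin n × Bool} {z : Cn n}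
    (hz : z ∉ tsupport f) : pd l f z = 0 := by
  have hev : f =ᶠ[nhds z] (fun _ => (0:ℂ)) :=
    eventually_of_mem ((isClosed_tsupport f).isOpen_compl.mem_nhds hz) fun w hw =>
      image_eq_zero_of_notMem_tsupport hw
  rw [pd_congr hev]
  simp [pd, fderiv_const]

theorem stmt3' {n : ℕ} (Ω : Set (Cn n)) (hΩ : IsOpen Ω)
    (φ : Cn n → ℝ) (hφ : ContDiffOn ℝ 2 φ Ω)
    (ε : ℝ) (hε : 0 < ε)
    (f : Cn n → ℂ) (hf : SmoothCompSupp Ω f) :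
    (∫ z in Ω, ((∑ l : Fin n × Bool, (pd l φ z)^2)
        + (1 + ε) * (∑ l : Fin n × Bool, pd l (pd l φ) z)) * ‖f z‖^2 * Real.exp (-φ z))
      ≤ (2 + ε + 1/ε) * ∑ l : Fin n × Bool,
          ∫ z in Ω, ‖pd l f z - Complex.ofReal (pd l φ z) * f z‖^2 * Real.exp (-φ z) := by
  obtain ⟨hfs, hfc, hfΩ⟩ := hf
  -- sandwich compact sets
  obtain ⟨L₁, hL₁c, hKL₁, hL₁Ω⟩ := exists_compact_between hfc hΩ hfΩ
  obtain ⟨L₂, hL₂c, hL₁L₂, hL₂Ω⟩ := exists_compact_between hL₁c hΩ hL₁Ω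
  -- smooth cutoff
  obtain ⟨χm, hχ0, hχ1, hχ01⟩ := exists_contMDiffMap_zero_one_of_isClosed (I := modelWithCornersSelf ℝ (Cn n)) (n := (⊤ : ℕ∞))
    (isOpen_interior (s := L₂)).isClosed_compl hL₁c.isClosed
    (Set.disjoint_left.mpr fun z hz hz' => hz (hL₁L₂ hz'))
  set χ : Cn n → ℝ := ⇑χm with hχ_def
  have hχsm : ContDiff ℝ (⊤ : ℕ∞) χ := by
    have := χm.contMDiff
    rwa [contMDiff_iff_contDiff] at this
  have hχsupp : tsupport χ ⊆ L₂ := by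
    refine closure_minimal (fun z hz => interior_subset (s := L₂) ?_) hL₂c.isClosed
    by_contra hz2
    exact hz (hχ0 hz2)
  -- the modified weight
  set ψ := fun z => χ z * φ z with hψ_def
  have hψ : ContDiff ℝ 2 ψ := by
    rw [contDiff_iff_contDiffAt]
    intro z
    by_cases hz : z ∈ Ω
    · exact ((hχsm.of_le (by exact_mod_cast ENat.natCast_le_of_coe_top_le_withTop le_rfl 2)).contDiffAt).mul (hφ.contDiffAt (hΩ.mem_nhds hz))
    · have hz' : z ∉ tsupport χ := fun h => hz (hL₂Ω (hχsupp h))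
      refine (contDiffAt_const (c := 0)).congr_of_eventuallyEq ?_
      exact eventually_of_mem ((isClosed_tsupport χ).isOpen_compl.mem_nhds hz')
        fun w hw => by simp [hψ_def, image_eq_zero_of_notMem_tsupport hw]
  set U := interior L₁ with hU_def
  have hUopen : IsOpen U := isOpen_interior
  have hKU : tsupport f ⊆ U := hKL₁
  have hEq : Set.EqOn ψ φ U := fun z hz => by
    simp [hψ_def, hχ1 (interior_subset hz)]
  have hnh : ∀ z ∈ U, ψ =ᶠ[nhds z] φ := fun z hz =>
    eventually_of_mem (hUopen.mem_nhds hz) fun w hw => hEq hw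
  have hpd : ∀ l, ∀ z ∈ U, pd l ψ z = pd l φ z := fun l z hz => pd_congr (hnh z hz)
  have hpd2 : ∀ l, ∀ z ∈ U, pd l (pd l ψ) z = pd l (pd l φ) z := by
    intro l z hz
    refine pd_congr (eventually_of_mem (hUopen.mem_nhds hz) fun w hw => hpd l w hw)
  -- integrand equalities on Ω and vanishing off Ω
  have hf_zero : ∀ z, z ∉ U → f z = 0 := fun z hz =>
    image_eq_zero_of_notMem_tsupport fun h => hz (hKU h)
  have hLHS_eq : ∀ z ∈ Ω,
      ((∑ l : Fin n × Bool, (pd l φ z)^2)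
        + (1 + ε) * (∑ l : Fin n × Bool, pd l (pd l φ) z)) * ‖f z‖^2 * Real.exp (-φ z)
      = ((∑ l : Fin n × Bool, (pd l ψ z)^2)
        + (1 + ε) * (∑ l : Fin n × Bool, pd l (pd l ψ) z)) * ‖f z‖^2 * Real.exp (-ψ z) := by
    intro z _
    by_cases hzU : z ∈ U
    · have e1 : (∑ l : Fin n × Bool, (pd l φ z)^2) = ∑ l : Fin n × Bool, (pd l ψ z)^2 :=
        Finset.sum_congr rfl fun l _ => by rw [hpd l z hzU]
      have e2 : (∑ l : Fin n × Bool, pd l (pd l φ) z)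
          = ∑ l : Fin n × Bool, pd l (pd l ψ) z :=
        Finset.sum_congr rfl fun l _ => by rw [hpd2 l z hzU]
      rw [e1, e2, hEq hzU]
    · simp [hf_zero z hzU]
  have hRHS_eq : ∀ (l : Fin n × Bool), ∀ z ∈ Ω,
      ‖pd l f z - Complex.ofReal (pd l φ z) * f z‖^2 * Real.exp (-φ z)
      = ‖pd l f z - Complex.ofReal (pd l ψ z) * f z‖^2 * Real.exp (-ψ z) := by
    intro l z _
    by_cases hzU : z ∈ U
    · rw [hpd l z hzU, hEq hzU]
    · rw [hf_zero z hzU, pdC_zero_of_nmem fun h => hzU (hKU h)]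
      simp
  -- convert set integrals to integrals over the whole space with ψ
  have hLHS_int : (∫ z in Ω, ((∑ l : Fin n × Bool, (pd l φ z)^2)
        + (1 + ε) * (∑ l : Fin n × Bool, pd l (pd l φ) z)) * ‖f z‖^2 * Real.exp (-φ z))
      = ∫ z, ((∑ l : Fin n × Bool, (pd l ψ z)^2)
        + (1 + ε) * (∑ l : Fin n × Bool, pd l (pd l ψ) z)) * ‖f z‖^2 * Real.exp (-ψ z) := by
    rw [setIntegral_congr_fun hΩ.measurableSet hLHS_eq]
    refine setIntegral_eq_integral_of_forall_compl_eq_zero fun z hz => ?_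
    have hzU : z ∉ U := fun h => hz (hL₁Ω (interior_subset h))
    simp [hf_zero z hzU]
  have hRHS_int : ∀ (l : Fin n × Bool),
      (∫ z in Ω, ‖pd l f z - Complex.ofReal (pd l φ z) * f z‖^2 * Real.exp (-φ z))
      = ∫ z, ‖pd l f z - Complex.ofReal (pd l ψ z) * f z‖^2 * Real.exp (-ψ z) := by
    intro l
    rw [setIntegral_congr_fun hΩ.measurableSet (hRHS_eq l)]
    refine setIntegral_eq_integral_of_forall_compl_eq_zero fun z hz => ?_
    have hzU : z ∉ U := fun h => hz (hL₁Ω (interior_subset h))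
    have hzt : z ∉ tsupport f := fun h => hzU (hKU h)
    rw [hf_zero z hzU, pdC_zero_of_nmem hzt]
    simp
  rw [hLHS_int]
  rw [Finset.sum_congr rfl fun l _ => hRHS_int l]
  -- now reduce to the sum of the core inequalities
  have hψ2 : ContDiff ℝ ((1:ℕ) + 1 : ℕ) ψ := by exact_mod_cast hψ
  have hint_l : ∀ l : Fin n × Bool, Integrable
      (fun z => ((pd l ψ z)^2 + (1+ε) * pd l (pd l ψ) z) * (‖f z‖^2 * Real.exp (-ψ z))) := by
    intro l
    have hc : Continuous
        (fun z => ((pd l ψ z)^2 + (1+ε) * pd l (pd l ψ) z) * (‖f z‖^2 * Real.exp (-ψ z))) := by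
      have h1 : Continuous (pd l ψ) := (contDiff_pd hψ2).continuous
      have h2 : Continuous (pd l (pd l ψ)) := continuous_pd (contDiff_pd hψ2)
      exact ((h1.pow 2).add (continuous_const.mul h2)).mul
        ((hfs.continuous.norm.pow 2).mul ((hψ.continuous.neg).rexp))
    refine hc.integrable_of_hasCompactSupport (HasCompactSupport.intro hfc fun z hz => ?_)
    simp [image_eq_zero_of_notMem_tsupport hz]
  have hsplit : (∫ z, ((∑ l : Fin n × Bool, (pd l ψ z)^2)
        + (1 + ε) * (∑ l : Fin n × Bool, pd l (pd l ψ) z)) * ‖f z‖^2 * Real.exp (-ψ z))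
      = ∑ l : Fin n × Bool,
        ∫ z, ((pd l ψ z)^2 + (1+ε) * pd l (pd l ψ) z) * (‖f z‖^2 * Real.exp (-ψ z)) := by
    rw [← integral_finset_sum _ fun l _ => hint_l l]
    refine integral_congr_ae (Eventually.of_forall fun z => ?_)
    simp only [Finset.mul_sum, ← Finset.sum_add_distrib, Finset.sum_mul, mul_assoc]
  rw [hsplit]
  calc (∑ l : Fin n × Bool,
        ∫ z, ((pd l ψ z)^2 + (1+ε) * pd l (pd l ψ) z) * (‖f z‖^2 * Real.exp (-ψ z)))
      ≤ ∑ l : Fin n × Bool, (2+ε+1/ε) *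
          ∫ z, ‖pd l f z - Complex.ofReal (pd l ψ z) * f z‖^2 * Real.exp (-ψ z) :=
        Finset.sum_le_sum fun l _ => core hε ψ hψ f hfs hfc l
    _ = (2+ε+1/ε) * ∑ l : Fin n × Bool,
          ∫ z, ‖pd l f z - Complex.ofReal (pd l ψ z) * f z‖^2 * Real.exp (-ψ z) := by
        rw [Finset.mul_sum]

/-- `∫ (|∇φ|² + (1+ε)Δφ)|f|² e^{−φ} ≤ (2+ε+1/ε) Σ_l ∫ |∂_l f − (∂_l φ)f|² e^{−φ}`. -/
theorem stmt3 {n : ℕ} (Ω : Set (Cn n)) (hΩ : IsOpen Ω)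
    (φ : Cn n → ℝ) (hφ : ContDiffOn ℝ 2 φ Ω)
    (ε : ℝ) (hε : 0 < ε)
    (f : Cn n → ℂ) (hf : SmoothCompSupp Ω f) :
    (∫ z in Ω, (gradSq φ z + (1 + ε) * lap φ z) * ‖f z‖^2 * Real.exp (-φ z))
      ≤ (2 + ε + 1/ε) * ∑ l : Fin n × Bool,
          ∫ z in Ω, ‖pd l f z - Complex.ofReal (pd l φ z) * f z‖^2 * Real.exp (-φ z) := by
  have h := stmt3' Ω hΩ φ hφ ε hε f hf
  simpa [gradSq, lap] using h
end
end
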